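/- Let $0 < t_0 < t_1 < \cdots < t_N < 1$ with $h_i = t_{i+1} - t_i$, and suppose there is $\eta > 0$ with $h_i \leq \eta \sqrt{1 - t_{i+1}}$ for all $i$. Let $(a_i)_{i=0}^N$ be a nondecreasing sequence of nonnegative reals such that $a_i \leq \frac{A}{1-t_i} + B$ for all $i$, where $A, B \geq 0$. Then $\sum_{i=0}^{N-1} h_i^2 (a_{i+1} - a_i) \leq \eta^2 \left( A \sum_{i=1}^{N-1} \frac{h_i}{1-t_i} + A + B \right)$. -/

import Mathlib

theorem stmt18 (N : ℕ) (t : ℕ → ℝ) (η A B : ℝ) (hη : 0 < η) (hA : 0 ≤ A) (hB : 0 ≤ B)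
    (ht0 : 0 < t 0) (hmono : ∀ i < N, t i < t (i + 1)) (htN : t N < 1)
    (hstep : ∀ i < N, t (i + 1) - t i ≤ η * Real.sqrt (1 - t (i + 1)))
    (a : ℕ → ℝ) (ha0 : ∀ i ≤ N, 0 ≤ a i) (hamono : ∀ i < N, a i ≤ a (i + 1))
    (hab : ∀ i ≤ N, a i ≤ A / (1 - t i) + B) :
    ∑ i ∈ Finset.range N, (t (i + 1) - t i) ^ 2 * (a (i + 1) - a i)
      ≤ η ^ 2 * (A * ∑ i ∈ Finset.Ico 1 N, (t (i + 1) - t i) / (1 - t i) + A + B) := by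
  rcases Nat.eq_zero_or_pos N with hN0 | hN
  · subst hN0
    have h0 : Finset.Ico 1 0 = (∅ : Finset ℕ) := by simp
    rw [h0]
    simp
    nlinarith [sq_nonneg η]
  · have hle : ∀ j, j ≤ N → ∀ i, i ≤ j → t i ≤ t j := by
      intro j hj
      induction j with
      | zero => intro i hi; interval_cases i; exact le_rfl
      | succ n ih =>
        intro i hi
        rcases Nat.eq_or_lt_of_le hi with h | h
        · rw [h]
        · exact le_trans (ih (by omega) i (by omega)) (le_of_lt (hmono n (by omega)))
    have htlt : ∀ i, i ≤ N → t i < 1 := fun i hi => lt_of_le_of_lt (hle N le_rfl i hi) htN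
    have key : ∑ i ∈ Finset.range N, (1 - t (i+1)) * (a (i+1) - a i)
        ≤ A * ∑ i ∈ Finset.Ico 1 N, (t (i + 1) - t i) / (1 - t i) + A + B := by
      have tel : ∑ i ∈ Finset.range N, ((1 - t (i+1)) * a (i+1) - (1 - t i) * a i)
          = (1 - t N) * a N - (1 - t 0) * a 0 :=
        Finset.sum_range_sub (fun i => (1 - t i) * a i) N
      have expand : ∑ i ∈ Finset.range N, (1 - t (i+1)) * (a (i+1) - a i)
          = ((1 - t N) * a N - (1 - t 0) * a 0)
            + ∑ i ∈ Finset.range N, (t (i+1) - t i) * a i := by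
        rw [← tel, ← Finset.sum_add_distrib]
        apply Finset.sum_congr rfl
        intro i _; ring
      rw [expand, Finset.range_eq_Ico,
        Finset.sum_eq_sum_Ico_succ_bot hN (fun i => (t (i+1) - t i) * a i)]
      have hbound : ∑ i ∈ Finset.Ico 1 N, (t (i+1) - t i) * a i
          ≤ A * ∑ i ∈ Finset.Ico 1 N, (t (i + 1) - t i) / (1 - t i)
            + B * ∑ i ∈ Finset.Ico 1 N, (t (i+1) - t i) := by
        rw [Finset.mul_sum, Finset.mul_sum, ← Finset.sum_add_distrib]
        apply Finset.sum_le_sum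
        intro i hi
        obtain ⟨hi1, hiN⟩ := Finset.mem_Ico.mp hi
        have h1 : 0 < 1 - t i := by linarith [htlt i (le_of_lt hiN)]
        have h2 : 0 < t (i+1) - t i := by linarith [hmono i hiN]
        have h3 := hab i (le_of_lt hiN)
        calc (t (i+1) - t i) * a i ≤ (t (i+1) - t i) * (A / (1 - t i) + B) :=
              mul_le_mul_of_nonneg_left h3 (le_of_lt h2)
          _ = A * ((t (i+1) - t i) / (1 - t i)) + B * (t (i+1) - t i) := by
              field_simp
      have htel2 : ∑ i ∈ Finset.Ico 1 N, (t (i+1) - t i) = t N - t 1 := by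
        have h4 := Finset.sum_range_sub t N
        rw [Finset.range_eq_Ico,
          Finset.sum_eq_sum_Ico_succ_bot hN (fun i => t (i+1) - t i)] at h4
        linarith
      rw [htel2] at hbound
      have haN : (1 - t N) * a N ≤ A + (1 - t N) * B := by
        have h1 : 0 < 1 - t N := by linarith
        have h2 := hab N le_rfl
        have h3 : (1 - t N) * (A / (1 - t N) + B) = A + (1 - t N) * B := by
          field_simp
        nlinarith [mul_le_mul_of_nonneg_left h2 h1.le]
      have ht1 : t 1 < 1 := htlt 1 hN
      have ht1pos : 0 < t 1 := lt_trans ht0 (hmono 0 hN)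
      have ha0' : 0 ≤ a 0 := ha0 0 (Nat.zero_le N)
      nlinarith [mul_nonneg (by linarith : (0:ℝ) ≤ 1 - t 1) ha0',
        mul_nonneg ht1pos.le hB]
    calc ∑ i ∈ Finset.range N, (t (i + 1) - t i) ^ 2 * (a (i + 1) - a i)
        ≤ ∑ i ∈ Finset.range N, η ^ 2 * ((1 - t (i+1)) * (a (i+1) - a i)) := by
          apply Finset.sum_le_sum
          intro i hi
          have hiN := Finset.mem_range.mp hi
          have hs : 0 < 1 - t (i+1) := by linarith [htlt (i+1) hiN]
          have hsq : Real.sqrt (1 - t (i+1)) ^ 2 = 1 - t (i+1) :=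
            Real.sq_sqrt hs.le
          have h4 : (t (i+1) - t i) ^ 2 ≤ η ^ 2 * (1 - t (i+1)) := by
            nlinarith [hstep i hiN, Real.sqrt_nonneg (1 - t (i+1)),
              hmono i hiN]
          have h5 : 0 ≤ a (i+1) - a i := by linarith [hamono i hiN]
          calc (t (i + 1) - t i) ^ 2 * (a (i + 1) - a i)
              ≤ (η ^ 2 * (1 - t (i+1))) * (a (i+1) - a i) :=
                mul_le_mul_of_nonneg_right h4 h5
            _ = η ^ 2 * ((1 - t (i+1)) * (a (i+1) - a i)) := by ring
      _ = η ^ 2 * ∑ i ∈ Finset.range N, (1 - t (i+1)) * (a (i+1) - a i) :=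
          (Finset.mul_sum _ _ _).symm
      _ ≤ η ^ 2 * (A * ∑ i ∈ Finset.Ico 1 N, (t (i + 1) - t i) / (1 - t i) + A + B) :=
          mul_le_mul_of_nonneg_left key (sq_nonneg η)
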